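/- For composable Grothendieck fibrations P : E → B₂ and Q : B₂ → B₁ and any object I of B₁, the restriction of P to the fibers gives a functor P_I : E_I → (B₂)_I from the fiber of Q∘P over I to the fiber of Q over I, and P_I is itself a Grothendieck fibration. -/

import Mathlib

open CategoryTheory Functor CategoryTheory.Functor IsHomLift

section Aux

variable {E B₂ B₁ : Type*} [Category E] [Category B₂] [Category B₁]
  (P : E ⥤ B₂) (Q : B₂ ⥤ B₁)

lemma comp_homLift {R S : B₁} {X Y : B₂} (f : R ⟶ S) (u : X ⟶ Y) {a b : E} (φ : a ⟶ b)
    [P.IsHomLift u φ] [Q.IsHomLift f u] : (P ⋙ Q).IsHomLift f φ := by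
  subst_hom_lift P u φ
  subst_hom_lift Q f (P.map φ)
  exact inferInstanceAs ((P ⋙ Q).IsHomLift ((P ⋙ Q).map φ) φ)

/-- The induced functor on fibers. -/
def fiberMap (I : B₁) : (P ⋙ Q).Fiber I ⥤ Q.Fiber I :=
  Fiber.inducedFunctor (p := Q) (F := Fiber.fiberInclusion ⋙ P)
    (Fiber.fiberInclusion_comp_eq_const (p := P ⋙ Q) (S := I))

variable {P Q} {I : B₁}

lemma fiberMap_homLift {x y : (P ⋙ Q).Fiber I} {R S : Q.Fiber I} (g : R ⟶ S) (π : x ⟶ y)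
    [(fiberMap P Q I).IsHomLift g π] : P.IsHomLift g.1 π.1 := by
  have ha := domain_eq (fiberMap P Q I) g π
  have hb := codomain_eq (fiberMap P Q I) g π
  have hfac := congrArg Fiber.fiberInclusion.map (fac' (fiberMap P Q I) g π)
  rw [Fiber.fiberInclusion.map_comp, Fiber.fiberInclusion.map_comp, eqToHom_map,
    eqToHom_map] at hfac
  exact of_fac' P g.1 π.1 (congrArg Subtype.val ha) (congrArg Subtype.val hb) hfac

lemma fiberMap_homLift_of {x y : (P ⋙ Q).Fiber I} {R S : Q.Fiber I} (g : R ⟶ S) (π : x ⟶ y)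
    (h : P.IsHomLift g.1 π.1) : (fiberMap P Q I).IsHomLift g π := by
  have ha : (fiberMap P Q I).obj x = R := Subtype.ext (@domain_eq _ _ _ _ P _ _ _ _ g.1 π.1 h)
  have hb : (fiberMap P Q I).obj y = S := Subtype.ext (@codomain_eq _ _ _ _ P _ _ _ _ g.1 π.1 h)
  apply of_fac' (fiberMap P Q I) g π ha hb
  apply Fiber.hom_ext
  rw [Fiber.fiberInclusion.map_comp, Fiber.fiberInclusion.map_comp, eqToHom_map, eqToHom_map]
  exact fac' P g.1 π.1

end Aux

theorem stmt10 {E B₂ B₁ : Type*} [Category E] [Category B₂] [Category B₁]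
    (P : E ⥤ B₂) (Q : B₂ ⥤ B₁) [P.IsFibered] [Q.IsFibered] (I : B₁) :
    ∃ PI : (P ⋙ Q).Fiber I ⥤ Q.Fiber I,
      (PI ⋙ Functor.Fiber.fiberInclusion = Functor.Fiber.fiberInclusion ⋙ P) ∧
      PI.IsFibered := by
  refine ⟨fiberMap P Q I, rfl, ?_⟩
  apply IsFibered.of_exists_isStronglyCartesian
  intro a R f
  have hf1 : Q.IsHomLift (𝟙 I) f.1 := f.2
  obtain ⟨b, φ, hφ⟩ := IsPreFibered.exists_isCartesian' (p := P) f.1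
  have hsc : P.IsStronglyCartesian f.1 φ :=
    @IsFibered.isStronglyCartesian_of_isCartesian _ _ _ _ P _ _ _ f.1 _ _ φ hφ
  have hbR : P.obj b = R.1 := domain_eq P f.1 φ
  have hb : (P ⋙ Q).obj b = I := by rw [Functor.comp_obj, hbR, R.2]
  have hφl : (P ⋙ Q).IsHomLift (𝟙 I) φ := comp_homLift P Q (𝟙 I) f.1 φ
  let b' : (P ⋙ Q).Fiber I := ⟨b, hb⟩
  let φ' : b' ⟶ a := ⟨φ, hφl⟩
  refine ⟨b', φ', ?_⟩
  have hlift : (fiberMap P Q I).IsHomLift f φ' :=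
    fiberMap_homLift_of f φ' hφ.toIsHomLift
  refine { toIsHomLift := hlift, universal_property' := ?_ }
  intro c g ψ hψ
  have hψ1 : P.IsHomLift (g.1 ≫ f.1) ψ.1 := fiberMap_homLift (g ≫ f) ψ
  obtain ⟨χ, ⟨hχl, hχc⟩, hχu⟩ := @IsStronglyCartesian.universal_property' _ _ _ _ _ _ _ _ _ f.1 _ hsc c.1 g.1 ψ.1 hψ1
  have : Q.IsHomLift (𝟙 I) g.1 := g.2
  have hχI : (P ⋙ Q).IsHomLift (𝟙 I) χ := @comp_homLift _ _ _ _ _ _ P Q _ _ _ _ (𝟙 I) g.1 _ _ χ hχl this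
  refine ⟨⟨χ, hχI⟩, ⟨fiberMap_homLift_of g (⟨χ, hχI⟩ : c ⟶ b') hχl, Fiber.hom_ext hχc⟩, ?_⟩
  rintro π ⟨hπl, hπc⟩
  apply Fiber.hom_ext
  exact hχu π.1 ⟨fiberMap_homLift g π, congrArg Fiber.fiberInclusion.map hπc⟩
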